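/- Let δ > 0 and p ∈ G(δ). Then every point r of the graph F̂ satisfies dist(r, 𝒞_p⁺) ≥ δ, where dist(r, 𝒞_p⁺) is the Euclidean (infimum) distance from r to the open upper cone 𝒞_p⁺; equivalently, F̂ is contained in the set {r ∈ B̂×ℝ : dist(r, 𝒞_p⁺) ≥ δ}. -/

import Mathlib

open Metric Set

noncomputable section

/-- `ℝ^n` with the Euclidean norm. -/
abbrev Euc (n : ℕ) := EuclideanSpace ℝ (Fin n)

/-- The space `ℝ^{d-1} × ℝ` equipped with the Euclidean (l²) product distance. -/
abbrev Pt (d : ℕ) := WithLp 2 (Euc (d - 1) × ℝ)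

/-- The point `(x, y) ∈ ℝ^{d-1} × ℝ`. -/
def toPt (d : ℕ) (x : Euc (d - 1)) (y : ℝ) : Pt d :=
  (WithLp.equiv 2 (Euc (d - 1) × ℝ)).symm (x, y)

/-- First (horizontal) component of a point of `ℝ^{d-1} × ℝ`. -/
def fstPt (d : ℕ) (p : Pt d) : Euc (d - 1) := (WithLp.equiv 2 (Euc (d - 1) × ℝ) p).1

/-- Second (vertical) component of a point of `ℝ^{d-1} × ℝ`. -/
def sndPt (d : ℕ) (p : Pt d) : ℝ := (WithLp.equiv 2 (Euc (d - 1) × ℝ) p).2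

/-- `F̂`, the graph of `f` over the ball `B̂` of radius `R`. -/
def graphF (d : ℕ) (f : Euc (d - 1) → ℝ) (R : ℝ) : Set (Pt d) :=
  (fun x => toPt d x (f x)) '' Metric.ball (0 : Euc (d - 1)) R

/-- `G(δ)`: points above the graph, over the smaller ball `B` of radius `r`, whose
Euclidean distance to the graph `F̂` equals `δ`. -/
def GSet (d : ℕ) (f : Euc (d - 1) → ℝ) (R r δ : ℝ) : Set (Pt d) :=
  { p | fstPt d p ∈ Metric.ball (0 : Euc (d - 1)) r ∧ f (fstPt d p) < sndPt d p ∧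
        Metric.infDist p (graphF d f R) = δ }

/-- The open upper cone with vertex `p` and slope `Λ`:
`𝒞_p⁺ = p + {(x,y) : y > Λ|x|}`. -/
def upperCone (d : ℕ) (Λ : ℝ) (p : Pt d) : Set (Pt d) :=
  { q | Λ * ‖fstPt d q - fstPt d p‖ < sndPt d q - sndPt d p }

/-- If `p ∈ G(δ)`, then every point of the graph `F̂` is at (Euclidean
infimum) distance at least `δ` from the open upper cone `𝒞_p⁺`. -/

private lemma distPt_sq (d : ℕ) (v w : Pt d) :
    (dist v w)^2 = ‖fstPt d v - fstPt d w‖^2 + (sndPt d v - sndPt d w)^2 := by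
  rw [dist_eq_norm, WithLp.prod_norm_sq_eq_of_L2]
  norm_num [fstPt, sndPt]

private lemma le_of_sq_le_sq' {a c : ℝ} (ha : 0 ≤ a) (hc : 0 ≤ c) (h : a^2 ≤ c^2) : a ≤ c := by
  have := Real.sqrt_le_sqrt h
  rwa [Real.sqrt_sq ha, Real.sqrt_sq hc] at this


set_option maxHeartbeats 1000000 in
theorem graph_far_from_upper_cone
    (d : ℕ) (hd : 2 ≤ d) (Λ R r : ℝ) (hΛ : 0 ≤ Λ)
    (hr : 0 < r) (hrR : r < R)
    (f : Euc (d - 1) → ℝ)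
    (hf : LipschitzOnWith Λ.toNNReal f (Metric.ball (0 : Euc (d - 1)) R))
    (δ : ℝ) (hδ : 0 < δ)
    (p : Pt d) (hp : p ∈ GSet d f R r δ) :
    ∀ q ∈ graphF d f R, δ ≤ Metric.infDist q (upperCone d Λ p) := by
  obtain ⟨hp1, hp2, hpd⟩ := hp
  set p1 := fstPt d p with hp1def
  set p2 := sndPt d p with hp2def
  rw [mem_ball, dist_zero_right] at hp1
  have hp1R : ‖p1‖ < R := hp1.trans hrR
  -- Lipschitz estimate in convenient form
  have hlip : ∀ y z : Euc (d-1), ‖y‖ < R → ‖z‖ < R → f y - f z ≤ Λ * ‖y - z‖ := by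
    intro y z hy hz
    have h := hf.dist_le_mul y (mem_ball_zero_iff.mpr hy) z (mem_ball_zero_iff.mpr hz)
    rw [Real.coe_toNNReal _ hΛ, dist_eq_norm, dist_eq_norm] at h
    calc f y - f z ≤ |f y - f z| := le_abs_self _
      _ = ‖f y - f z‖ := (Real.norm_eq_abs _).symm
      _ ≤ Λ * ‖y - z‖ := h
  intro q hq
  obtain ⟨x, hx, rfl⟩ := hq
  rw [mem_ball, dist_zero_right] at hx
  have hne : (upperCone d Λ p).Nonempty := by
    refine ⟨toPt d p1 (p2 + 1), ?_⟩
    show Λ * ‖fstPt d (toPt d p1 (p2+1)) - p1‖ < sndPt d (toPt d p1 (p2+1)) - p2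
    show Λ * ‖p1 - p1‖ < (p2 + 1) - p2
    simp
  by_contra hcon
  push_neg at hcon
  rw [infDist_lt_iff hne] at hcon
  obtain ⟨z, hzc, hdz⟩ := hcon
  have hz : Λ * ‖fstPt d z - p1‖ < sndPt d z - p2 := hzc
  -- scalar data
  set u : Euc (d-1) := fstPt d z - p1 with hudef
  set t : ℝ := sndPt d z - p2 with htdef
  set s0 : ℝ := ‖x - p1‖ with hs0def
  set b : ℝ := f x - p2 with hbdef
  set nu : ℝ := ‖u‖ with hnudef
  set ι : ℝ := (inner ℝ (x - p1) u : ℝ) with hιdef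
  have hCS : ι ≤ s0 * nu := real_inner_le_norm _ _
  have hnu0 : 0 ≤ nu := norm_nonneg _
  have hs00 : 0 ≤ s0 := norm_nonneg _
  have hh0 : 0 < p2 - f p1 := sub_pos.mpr hp2
  have hbb : b ≤ Λ * s0 - (p2 - f p1) := by
    have := hlip x p1 hx hp1R
    rw [hbdef, hs0def]; linarith
  have ht : Λ * nu < t := hz
  -- squared distance from q to z
  have hdqz : (dist (toPt d x (f x)) z)^2 = s0^2 - 2*ι + nu^2 + (b - t)^2 := by
    rw [distPt_sq]
    have h1 : fstPt d (toPt d x (f x)) - fstPt d z = (x - p1) - u := by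
      show x - fstPt d z = (x - p1) - (fstPt d z - p1); abel
    have h2 : sndPt d (toPt d x (f x)) - sndPt d z = b - t := by
      show f x - sndPt d z = (f x - p2) - (sndPt d z - p2); ring
    rw [h1, h2, norm_sub_sq_real]
    try ring
  -- the graph point is at distance ≥ δ from p
  have hmemg : toPt d x (f x) ∈ graphF d f R :=
    ⟨x, by rwa [mem_ball, dist_zero_right], rfl⟩
  have hδp : δ ≤ dist (toPt d x (f x)) p := by
    rw [dist_comm, ← hpd]; exact infDist_le_dist_of_mem hmemg
  have hfin : δ ≤ dist (toPt d x (f x)) z := by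
    rcases le_or_gt (s0 + Λ*b) 0 with hcA | hcB
    · -- Case A : the vertex p is the projection
      have hb0 : b < 0 := by
        by_contra hcc
        push_neg at hcc
        have h2 : 0 ≤ Λ^2 * b := mul_nonneg (sq_nonneg Λ) hcc
        linarith [mul_le_mul_of_nonneg_left hcA hΛ, h2]
      have hdqp : (dist (toPt d x (f x)) p)^2 = s0^2 + b^2 := by
        rw [distPt_sq]
        have h2 : sndPt d (toPt d x (f x)) - p2 = b := rfl
        have h1 : fstPt d (toPt d x (f x)) - p1 = x - p1 := rfl
        rw [h1, h2]
      have hsq : (dist (toPt d x (f x)) p)^2 ≤ (dist (toPt d x (f x)) z)^2 := by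
        rw [hdqp, hdqz]
        linarith [mul_nonneg hnu0 (neg_nonneg.mpr hcA),
          mul_nonneg (neg_nonneg.mpr hb0.le) (sub_nonneg.mpr ht.le), hCS,
          sq_nonneg nu, sq_nonneg t]
      exact hδp.trans (le_of_sq_le_sq' dist_nonneg dist_nonneg hsq)
    · -- Case B : projection onto the boundary ray of the cone
      have hs0 : 0 < s0 := by
        by_contra hcc
        push_neg at hcc
        have h2 : Λ^2 * s0 ≤ 0 := mul_nonpos_of_nonneg_of_nonpos (sq_nonneg Λ) hcc
        linarith [mul_le_mul_of_nonneg_left hbb hΛ, mul_nonneg hΛ hh0.le, h2]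
      set α : ℝ := (s0 + Λ*b) / (1 + Λ^2) with hαdef
      have h1Λ : (0:ℝ) < 1 + Λ^2 := by positivity
      have hαe : α * (1 + Λ^2) = s0 + Λ*b := by
        rw [hαdef]; field_simp
      have hα0 : 0 < α := div_pos hcB h1Λ
      have hαs0 : α ≤ s0 := by
        rw [hαdef, div_le_iff₀ h1Λ]
        linarith [mul_le_mul_of_nonneg_left hbb hΛ, mul_nonneg hΛ hh0.le]
      have hγ : b - Λ*α < 0 := by
        by_contra hcc
        push_neg at hcc
        have h2 : 0 ≤ (b - Λ*α) * (1 + Λ^2) := mul_nonneg hcc h1Λ.le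
        have h3 : Λ*(α*(1+Λ^2)) = Λ*(s0+Λ*b) := by rw [hαe]
        linarith [h2, h3, hbb, hh0]
      -- the projected point z⋆
      set zs : Pt d := toPt d (p1 + (α/s0) • (x - p1)) (p2 + Λ*α) with hzsdef
      have hdqzs : (dist (toPt d x (f x)) zs)^2 = (s0 - α)^2 + (b - Λ*α)^2 := by
        rw [distPt_sq]
        have h1 : fstPt d (toPt d x (f x)) - fstPt d zs = (1 - α/s0) • (x - p1) := by
          show x - (p1 + (α/s0) • (x - p1)) = (1 - α/s0) • (x - p1)
          rw [sub_smul, one_smul]; abel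
        have h2 : sndPt d (toPt d x (f x)) - sndPt d zs = b - Λ*α := by
          show f x - (p2 + Λ*α) = (f x - p2) - Λ*α; ring
        rw [h1, h2, norm_smul, Real.norm_eq_abs, abs_of_nonneg (by
          rw [sub_nonneg, div_le_one hs0]; exact hαs0)]
        have : (1 - α/s0) * ‖x - p1‖ = s0 - α := by
          field_simp
          rw [← hs0def]; ring
        rw [this]
      have hsq2 : (dist (toPt d x (f x)) zs)^2 ≤ (dist (toPt d x (f x)) z)^2 := by
        rw [hdqzs, hdqz]
        have hident : s0^2 - 2*ι + nu^2 + (b-t)^2 - ((s0-α)^2 + (b-Λ*α)^2)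
            = (nu-α)^2 + (t-Λ*α)^2 + 2*(Λ*α-b)*(t-Λ*nu) + 2*(s0*nu-ι) := by
          linear_combination (2*nu - 2*α) * hαe
        linarith [hident, sq_nonneg (nu-α), sq_nonneg (t-Λ*α),
          mul_nonneg (by linarith : (0:ℝ) ≤ Λ*α - b) (by linarith : (0:ℝ) ≤ t - Λ*nu), hCS]
      -- crossing argument : δ ≤ dist q zs
      have hδzs : δ ≤ dist (toPt d x (f x)) zs := by
        set μ : ℝ := 1 - α/s0 with hμdef
        have hμ0 : 0 ≤ μ := by rw [hμdef, sub_nonneg, div_le_one hs0]; exact hαs0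
        have hμ1 : μ ≤ 1 := by
          rw [hμdef]; have : 0 < α/s0 := div_pos hα0 hs0; linarith
        have hμlt : μ < 1 := by
          rw [hμdef]; have := div_pos hα0 hs0; linarith
        have hcmem : ∀ s ∈ Icc (0:ℝ) 1, ‖p1 + (s*μ) • (x - p1)‖ < R := by
          intro s hs
          have hsμ0 : 0 ≤ s*μ := mul_nonneg hs.1 hμ0
          have hsμ1 : s*μ < 1 := by
            have h4 : s*μ ≤ μ := by
              have := mul_nonneg (sub_nonneg.mpr hs.2) hμ0
              linarith
            linarith
          have heq : p1 + (s*μ) • (x - p1) = (1 - s*μ) • p1 + (s*μ) • x := by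
            rw [sub_smul, one_smul, smul_sub]; abel
          rw [heq]
          have hstep : ‖(1 - s*μ) • p1 + (s*μ) • x‖ ≤ (1 - s*μ) * ‖p1‖ + (s*μ) * ‖x‖ := by
            calc ‖(1 - s*μ) • p1 + (s*μ) • x‖ ≤ ‖(1 - s*μ) • p1‖ + ‖(s*μ) • x‖ :=
                  norm_add_le _ _
              _ = (1 - s*μ) * ‖p1‖ + (s*μ) * ‖x‖ := by
                  rw [norm_smul, norm_smul, Real.norm_eq_abs, Real.norm_eq_abs,
                    abs_of_nonneg (by linarith), abs_of_nonneg hsμ0]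
          have h5 : (1 - s*μ) * ‖p1‖ < (1 - s*μ) * R :=
            mul_lt_mul_of_pos_left hp1R (by linarith)
          have h6 : (s*μ) * ‖x‖ ≤ (s*μ) * R := mul_le_mul_of_nonneg_left hx.le hsμ0
          have h7 : (1 - s*μ) * R + (s*μ) * R = R := by ring
          linarith
        -- the function whose zero gives a graph point on the segment
        set φ : ℝ → ℝ := fun s => p2 + s*(b - Λ*α) - f (p1 + (s*μ) • (x - p1)) with hφdef
        have hφc : ContinuousOn φ (Icc 0 1) := by
          apply ContinuousOn.sub
          · exact (continuous_const.add (continuous_id.mul continuous_const)).continuousOn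
          · apply (hf.continuousOn).comp
            · exact (continuous_const.add
                ((continuous_id.mul continuous_const).smul continuous_const)).continuousOn
            · intro s hs; exact mem_ball_zero_iff.mpr (hcmem s hs)
        have hφ0 : 0 < φ 0 := by
          have h00 : φ 0 = p2 - f p1 := by simp [hφdef]
          rw [h00]; exact hh0
        have hφ1 : φ 1 ≤ 0 := by
          have hx1R : ‖p1 + (1*μ) • (x - p1)‖ < R := hcmem 1 (by norm_num)
          have hlip1 := hlip x (p1 + (1*μ) • (x - p1)) hx hx1R
          have hd : x - (p1 + (1*μ) • (x - p1)) = (α/s0) • (x - p1) := by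
            rw [one_mul, hμdef, sub_smul, one_smul]; abel
          rw [hd] at hlip1
          have hn : ‖(α/s0) • (x - p1)‖ = α := by
            rw [norm_smul, Real.norm_eq_abs, abs_of_nonneg (le_of_lt (div_pos hα0 hs0))]
            field_simp
            exact hs0def.symm
          rw [hn] at hlip1
          simp only [hφdef]
          have : f x - f (p1 + (1*μ) • (x - p1)) ≤ Λ * α := hlip1
          rw [hbdef]; linarith
        have hivt : (0:ℝ) ∈ φ '' Icc 0 1 := by
          apply intermediate_value_Icc' (by norm_num : (0:ℝ) ≤ 1) hφc
          exact ⟨hφ1, hφ0.le⟩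
        obtain ⟨sb, hsb, hsbz⟩ := hivt
        -- the graph point on the segment
        set w : Pt d := toPt d (p1 + (sb*μ) • (x - p1)) (f (p1 + (sb*μ) • (x - p1))) with hwdef
        have hwg : w ∈ graphF d f R :=
          ⟨p1 + (sb*μ) • (x - p1), by rw [mem_ball, dist_zero_right]; exact hcmem sb hsb, rfl⟩
        have hδw : δ ≤ dist p w := by rw [← hpd]; exact infDist_le_dist_of_mem hwg
        have hfw : f (p1 + (sb*μ) • (x - p1)) = p2 + sb*(b - Λ*α) := by
          have : p2 + sb*(b - Λ*α) - f (p1 + (sb*μ) • (x - p1)) = 0 := hsbz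
          linarith
        have hdpw : (dist p w)^2 = sb^2 * ((s0-α)^2 + (b-Λ*α)^2) := by
          rw [distPt_sq]
          have h1 : p1 - fstPt d w = -((sb*μ) • (x - p1)) := by
            show p1 - (p1 + (sb*μ) • (x - p1)) = _; abel
          have h2 : p2 - sndPt d w = -(sb*(b - Λ*α)) := by
            show p2 - f (p1 + (sb*μ) • (x - p1)) = _
            rw [hfw]; ring
          rw [show fstPt d p = p1 from rfl, show sndPt d p = p2 from rfl, h1, h2,
            norm_neg, norm_smul, Real.norm_eq_abs,
            abs_of_nonneg (mul_nonneg hsb.1 hμ0)]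
          have hμs : μ * s0 = s0 - α := by rw [hμdef]; field_simp
          have : sb * μ * ‖x - p1‖ = sb * (s0 - α) := by
            rw [← hs0def, mul_assoc, hμs]
          rw [this]; ring
        have hsq3 : (dist p w)^2 ≤ (dist (toPt d x (f x)) zs)^2 := by
          rw [hdpw, hdqzs]
          have hsb2 : sb^2 ≤ 1 := pow_le_one₀ hsb.1 hsb.2
          have key := mul_nonneg (sub_nonneg.mpr hsb2)
            (add_nonneg (sq_nonneg (s0-α)) (sq_nonneg (b-Λ*α)))
          linarith [key]
        calc δ ≤ dist p w := hδw
          _ ≤ dist (toPt d x (f x)) zs := le_of_sq_le_sq' dist_nonneg dist_nonneg hsq3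
      exact hδzs.trans (le_of_sq_le_sq' dist_nonneg dist_nonneg hsq2)
  exact absurd hdz (not_lt.mpr hfin)
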